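/- Let ζ = ζ_{2r} be a primitive 2r-th root of unity and consider the evaluation homomorphism ev : Z[q^{±1}, A^{±1}] → Z[ζ, A^{±1}], q ↦ ζ. Then ev maps the ideal I_{rn} (generated by {α+l; rn} for l ∈ Z) onto the ideal I^n = ({rα}^n), where {rα} = A^r − A^{−r}. Consequently ev induces a well-defined ring homomorphism between the completions lim_← R/I_{rn} → lim_← R_r/I^n. -/

import Mathlib

/-- The ring `R = ℤ[q^{±1}, A^{±1}]`, realized as the group algebra of `ℤ × ℤ` over `ℤ`. -/
abbrev TwoVarLaurent : Type := AddMonoidAlgebra ℤ (ℤ × ℤ)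

/-- `q^m`. -/
noncomputable def qpow (m : ℤ) : TwoVarLaurent := AddMonoidAlgebra.single (m, 0) 1

/-- `A^m`. -/
noncomputable def Apow (m : ℤ) : TwoVarLaurent := AddMonoidAlgebra.single (0, m) 1

/-- `{α+l; n} = ∏_{i=0}^{n−1} (A q^{l−i} − A^{−1} q^{−l+i})`. -/
noncomputable def braidProd (l : ℤ) (n : ℕ) : TwoVarLaurent :=
  ∏ i ∈ Finset.range n, (Apow 1 * qpow (l - i) - Apow (-1) * qpow (-l + i))

/-- The ideal `I_n` generated by the `{α+l; n}`, `l ∈ ℤ`. -/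
noncomputable def In (n : ℕ) : Ideal TwoVarLaurent :=
  Ideal.span { x | ∃ l : ℤ, x = braidProd l n }

open LaurentPolynomial in
/-- Key block computation: a product of `r` consecutive factors `T 2 - C ω^{i-l}`, where `ω`
is a primitive `r`-th root of unity (as a unit), equals `(T 2)^r - 1`. -/
lemma block_prod {S : Type*} [CommRing S] [IsDomain S] {r : ℕ} (hr : 0 < r) {ω : Sˣ}
    (hω : IsPrimitiveRoot ((ω : Sˣ) : S) r) (l : ℤ) :
    ∏ i ∈ Finset.range r, (T 2 - C ((ω ^ ((i : ℤ) - l) : Sˣ) : S))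
      = (T 2 : LaurentPolynomial S) ^ r - 1 := by
  have hωr : ω ^ (r : ℤ) = 1 := by
    have h : ω ^ (r : ℕ) = 1 := by
      ext
      rw [Units.val_pow_eq_pow_val]
      simpa using hω.pow_eq_one
    rw [zpow_natCast, h]
  have hmem : ∀ (k : ℤ), ((ω ^ k : Sˣ) : S) ∈ Polynomial.nthRootsFinset r (1 : S) := by
    intro k
    rw [Polynomial.mem_nthRootsFinset hr]
    have h1 : ((ω ^ k) ^ (r : ℤ) : Sˣ) = 1 := by
      rw [← zpow_mul, mul_comm, zpow_mul, hωr, one_zpow]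
    have h2 : ((ω ^ k) ^ (r : ℕ) : Sˣ) = 1 := by rw [← zpow_natCast (ω ^ k) r]; exact h1
    rw [← Units.val_pow_eq_pow_val, h2, Units.val_one]
  have hinj : ∀ (i j : ℕ), i ∈ Finset.range r → j ∈ Finset.range r →
      ((ω ^ ((i : ℤ) - l) : Sˣ) : S) = ((ω ^ ((j : ℤ) - l) : Sˣ) : S) → i = j := by
    intro i j hi hj h
    have h1 : (ω ^ ((i : ℤ) - l) : Sˣ) = ω ^ ((j : ℤ) - l) := Units.ext h
    have h2 : (ω ^ (i : ℤ) : Sˣ) = ω ^ (j : ℤ) := by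
      have := congrArg (· * ω ^ l) h1
      simpa [← zpow_add] using this
    have h2' : ω ^ (i : ℕ) = ω ^ (j : ℕ) := by
      rw [← zpow_natCast ω i, ← zpow_natCast ω j]; exact h2
    have h3 : ((ω : Sˣ) : S) ^ i = ((ω : Sˣ) : S) ^ j := by
      simpa [Units.val_pow_eq_pow_val] using congrArg Units.val h2'
    exact hω.pow_inj (Finset.mem_range.mp hi) (Finset.mem_range.mp hj) h3
  have hcard : (Polynomial.nthRootsFinset r (1 : S)).card ≤ (Finset.range r).card := by
    rw [hω.card_nthRootsFinset, Finset.card_range]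
  have hsurj := Finset.surj_on_of_inj_on_of_card_le
    (fun (i : ℕ) (_ : i ∈ Finset.range r) => ((ω ^ ((i : ℤ) - l) : Sˣ) : S))
    (fun i _ => hmem _) hinj hcard
  have hprod : ∏ i ∈ Finset.range r, (T 2 - C ((ω ^ ((i : ℤ) - l) : Sˣ) : S))
      = ∏ η ∈ Polynomial.nthRootsFinset r (1 : S), ((T 2 : LaurentPolynomial S) - C η) := by
    refine Finset.prod_bij (fun i _ => ((ω ^ ((i : ℤ) - l) : Sˣ) : S))
      (fun i _ => hmem _) (fun i hi j hj h => hinj i j hi hj h) ?_ (fun i _ => rfl)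
    intro b hb
    obtain ⟨a, ha, hab⟩ := hsurj b hb
    exact ⟨a, ha, hab.symm⟩
  rw [hprod]
  have := congrArg (Polynomial.eval₂ (C : S →+* LaurentPolynomial S) (T 2))
    (Polynomial.X_pow_sub_one_eq_prod hr hω)
  simpa [Polynomial.eval₂_finset_prod] using this.symm

open LaurentPolynomial in
lemma stmt18_aux {S : Type*} [CommRing S] [IsDomain S] (r n : ℕ) (hr : 1 ≤ r) (z : S)
    (hz : IsPrimitiveRoot z (2 * r)) (ev : TwoVarLaurent →+* LaurentPolynomial S)
    (hq : ev (qpow 1) = C z) (hA : ev (Apow 1) = T 1) :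
    Ideal.map ev (In (r * n)) =
      (Ideal.span {(T (r : ℤ) - T (-(r : ℤ)) : LaurentPolynomial S)}) ^ n := by
  classical
  have h2r : 0 < 2 * r := by omega
  have h2r : 0 < 2 * r := by omega
  -- z is a primitive 2r-th root of unity in S
  have hzu : IsUnit z := hz.isUnit h2r.ne'
  set zu : Sˣ := hzu.unit with hzudef
  have hzuval : ((zu : Sˣ) : S) = z := hzu.unit_spec
  set ω : Sˣ := zu ^ 2 with hωdef
  have hωval : ((ω : Sˣ) : S) = z ^ 2 := by rw [hωdef, Units.val_pow_eq_pow_val, hzuval]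
  have hω : IsPrimitiveRoot ((ω : Sˣ) : S) r := by
    rw [hωval]; exact hz.pow h2r rfl
  -- evaluation of powers of q and A
  have hq0 : qpow 0 = 1 := by
    simp [qpow, AddMonoidAlgebra.one_def, Prod.ext_iff, Prod.mk_zero_zero]
  have hqadd : ∀ a b : ℤ, qpow (a + b) = qpow a * qpow b := by
    intro a b
    simp [qpow, AddMonoidAlgebra.single_mul_single]
  have hA0 : Apow 0 = 1 := by
    simp [Apow, AddMonoidAlgebra.one_def, Prod.ext_iff, Prod.mk_zero_zero]
  have hAadd : ∀ a b : ℤ, Apow (a + b) = Apow a * Apow b := by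
    intro a b
    simp [Apow, AddMonoidAlgebra.single_mul_single]
  have hq1 : ev (qpow 1) = C ((zu : Sˣ) : S) := by rw [hq, hzuval]
  have hqneg : ev (qpow (-1)) = C ((zu⁻¹ : Sˣ) : S) := by
    have h1 : ev (qpow (-1)) * ev (qpow 1) = 1 := by
      rw [← map_mul, ← hqadd]; norm_num [hq0]
    have h2 : (C ((zu⁻¹ : Sˣ) : S)) * ev (qpow 1) = 1 := by
      rw [hq1, ← map_mul, ← Units.val_mul, inv_mul_cancel, Units.val_one, map_one]
    calc ev (qpow (-1)) = ev (qpow (-1)) * ((C ((zu⁻¹ : Sˣ) : S)) * ev (qpow 1)) := by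
          rw [h2, mul_one]
      _ = (ev (qpow (-1)) * ev (qpow 1)) * C ((zu⁻¹ : Sˣ) : S) := by ring
      _ = C ((zu⁻¹ : Sˣ) : S) := by rw [h1, one_mul]
  have hevq : ∀ m : ℤ, ev (qpow m) = C ((zu ^ m : Sˣ) : S) := by
    intro m
    induction m using Int.induction_on with
    | zero => simp [hq0]
    | succ k ih =>
        rw [hqadd k 1, map_mul, ih, hq1, ← map_mul, ← Units.val_mul, ← zpow_add_one]
    | pred k ih =>
        rw [show (-(k : ℤ) - 1) = (-k) + (-1) by ring, hqadd, map_mul, ih, hqneg,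
          ← map_mul, ← Units.val_mul, ← zpow_neg_one zu, ← zpow_add]
  have hAneg : ev (Apow (-1)) = T (-1) := by
    have h1 : ev (Apow (-1)) * ev (Apow 1) = 1 := by
      rw [← map_mul, ← hAadd]; norm_num [hA0]
    have h2 : (T (-1) : LaurentPolynomial S) * T 1 = 1 := by
      rw [← T_add]; norm_num
    rw [hA] at h1
    calc ev (Apow (-1)) = ev (Apow (-1)) * ((T (-1) : LaurentPolynomial S) * T 1) := by
          rw [h2, mul_one]
      _ = (ev (Apow (-1)) * T 1) * T (-1) := by ring
      _ = T (-1) := by rw [h1, one_mul]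
  have hevA : ∀ m : ℤ, ev (Apow m) = T m := by
    intro m
    induction m using Int.induction_on with
    | zero => simp [hA0]
    | succ k ih => rw [hAadd k 1, map_mul, ih, hA, ← T_add]
    | pred k ih =>
        rw [show (-(k : ℤ) - 1) = (-k) + (-1) by ring, hAadd, map_mul, ih, hAneg, ← T_add]
  -- the image of each factor of the braid product
  have hfactor : ∀ (l : ℤ) (i : ℕ),
      ev (Apow 1 * qpow (l - i) - Apow (-1) * qpow (-l + i))
        = C ((zu ^ (l - (i : ℤ)) : Sˣ) : S) * T (-1)
            * (T 2 - C ((ω ^ ((i : ℤ) - l) : Sˣ) : S)) := by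
    intro l i
    have hT : (T (-1) : LaurentPolynomial S) * T 2 = T 1 := by
      rw [← T_add]; norm_num
    have hCu : (C ((zu ^ (l - (i : ℤ)) : Sˣ) : S)) * (C ((ω ^ ((i : ℤ) - l) : Sˣ) : S))
        = C ((zu ^ (-l + (i : ℤ)) : Sˣ) : S) := by
      rw [← map_mul, ← Units.val_mul, hωdef, ← zpow_natCast zu 2, ← zpow_mul, ← zpow_add]
      congr 2
      ring
    rw [map_sub, map_mul, map_mul, hevA, hevA, hevq, hevq]
    linear_combination (T (-1) : LaurentPolynomial S) * hCu
      - (C ((zu ^ (l - (i : ℤ)) : Sˣ) : S)) * hT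
  -- product of n blocks
  have hPn : ∀ (n' : ℕ) (l' : ℤ),
      ∏ i ∈ Finset.range (r * n'), ((T 2 : LaurentPolynomial S)
          - C ((ω ^ ((i : ℤ) - l') : Sˣ) : S))
        = ((T 2 : LaurentPolynomial S) ^ r - 1) ^ n' := by
    intro n'
    induction n' with
    | zero => simp
    | succ k ih =>
        intro l'
        rw [Nat.mul_succ, Finset.prod_range_add, ih, pow_succ]
        congr 1
        have : ∀ i : ℕ, ((T 2 : LaurentPolynomial S)
            - C ((ω ^ (((r * k + i : ℕ) : ℤ) - l') : Sˣ) : S))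
            = ((T 2 : LaurentPolynomial S) - C ((ω ^ ((i : ℤ) - (l' - (r * k : ℕ))) : Sˣ) : S)) := by
          intro i
          congr 3
          push_cast
          ring
        rw [Finset.prod_congr rfl (fun i _ => this i)]
        exact block_prod hr hω _
  -- image of the generators
  have hbraid : ∀ l : ℤ, ev (braidProd l (r * n))
      = C (((∏ i ∈ Finset.range (r * n), zu ^ (l - (i : ℤ)) : Sˣ)) : S)
          * (T (r : ℤ) - T (-(r : ℤ))) ^ n := by
    intro l
    rw [braidProd, map_prod]
    rw [Finset.prod_congr rfl (fun i _ => hfactor l i)]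
    rw [Finset.prod_mul_distrib, Finset.prod_mul_distrib]
    have e1 : ∏ i ∈ Finset.range (r * n), (C ((zu ^ (l - (i : ℤ)) : Sˣ) : S))
        = C (((∏ i ∈ Finset.range (r * n), zu ^ (l - (i : ℤ)) : Sˣ)) : S) := by
      rw [← map_prod]
      congr 1
      exact (map_prod (Units.coeHom S) _ _).symm
    have e2 : ∏ _i ∈ Finset.range (r * n), (T (-1) : LaurentPolynomial S)
        = T (-((r * n : ℕ) : ℤ)) := by
      rw [Finset.prod_const, Finset.card_range, T_pow]
      congr 1
      push_cast
      ring
    rw [e1, e2, hPn n l, mul_assoc]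
    congr 1
    have e3 : (T (-((r * n : ℕ) : ℤ)) : LaurentPolynomial S) = (T (-(r : ℤ))) ^ n := by
      rw [T_pow]
      congr 1
      push_cast
      ring
    have e4 : (T (-(r : ℤ)) : LaurentPolynomial S) * ((T 2) ^ r - 1)
        = T (r : ℤ) - T (-(r : ℤ)) := by
      rw [T_pow, mul_sub, ← T_add, mul_one]
      congr 2
      push_cast
      ring
    rw [e3, ← mul_pow, e4]
  -- conclude by computing the ideal
  rw [In, Ideal.map_span, Ideal.span_singleton_pow]
  apply le_antisymm
  · rw [Ideal.span_le]
    rintro x ⟨y, ⟨l, rfl⟩, rfl⟩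
    rw [hbraid l]
    exact Ideal.mem_span_singleton.mpr (dvd_mul_left _ _)
  · rw [Ideal.span_le, Set.singleton_subset_iff]
    set U : Sˣ := ∏ i ∈ Finset.range (r * n), zu ^ ((0 : ℤ) - (i : ℤ)) with hU
    have hu : IsUnit (C ((U : Sˣ) : S) : LaurentPolynomial S) := (Units.isUnit U).map C
    have h0 : (C ((U : Sˣ) : S) : LaurentPolynomial S)
        * (T (r : ℤ) - T (-(r : ℤ))) ^ n
        ∈ Ideal.span (ev '' { x | ∃ l : ℤ, x = braidProd l (r * n) }) :=
      Ideal.subset_span ⟨braidProd 0 (r * n), ⟨0, rfl⟩, (hbraid 0).symm ▸ rfl⟩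
    have key : ((T (r : ℤ) - T (-(r : ℤ)) : LaurentPolynomial S)) ^ n
        = (↑hu.unit⁻¹ : LaurentPolynomial S)
            * ((C ((U : Sˣ) : S)) * (T (r : ℤ) - T (-(r : ℤ))) ^ n) := by
      rw [← mul_assoc]
      nth_rewrite 2 [← IsUnit.unit_spec hu]
      rw [Units.inv_mul, one_mul]
    rw [SetLike.mem_coe, key]
    exact Ideal.mul_mem_left _ _ h0

/-- let `ζ` be a primitive `2r`-th root of unity, and let
`ev : ℤ[q^{±1}, A^{±1}] → ℤ[ζ][A^{±1}]` be the evaluation homomorphism with `q ↦ ζ`,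
`A ↦ A` (codomain: Laurent polynomials over the subring `ℤ[ζ] ⊆ ℂ`). Then `ev` maps the
ideal `I_{rn}` onto the ideal `I^n = ({rα}^n)` with `{rα} = A^r − A^{−r}`. (This is the
statement making the induced map between the completions well defined.) -/
theorem stmt_18 (r n : ℕ) (hr : 1 ≤ r) (ζ : ℂ) (hζ : IsPrimitiveRoot ζ (2 * r))
    (ev : TwoVarLaurent →+* LaurentPolynomial (Algebra.adjoin ℤ ({ζ} : Set ℂ)))
    (hq : ev (qpow 1) =
      LaurentPolynomial.C ⟨ζ, Algebra.subset_adjoin (Set.mem_singleton ζ)⟩)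
    (hA : ev (Apow 1) = LaurentPolynomial.T 1) :
    Ideal.map ev (In (r * n)) =
      (Ideal.span {(LaurentPolynomial.T (r : ℤ) - LaurentPolynomial.T (-(r : ℤ)) :
        LaurentPolynomial (Algebra.adjoin ℤ ({ζ} : Set ℂ)))}) ^ n := by
  have hz : IsPrimitiveRoot (⟨ζ, Algebra.subset_adjoin (Set.mem_singleton ζ)⟩ :
      Algebra.adjoin ℤ ({ζ} : Set ℂ)) (2 * r) := by
    refine IsPrimitiveRoot.of_map_of_injective (f := (Algebra.adjoin ℤ ({ζ} : Set ℂ)).val)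
      ?_ Subtype.coe_injective
    exact hζ
  exact stmt18_aux r n hr _ hz ev hq hA
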